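/- Let C ⊆ F_2^n be a nonempty code, let 0 ≤ p ≤ 1/2, and suppose f(x) = Σ_k f_k·K_k(x) satisfies f_k ≥ 0 for 1 ≤ k ≤ n and f(i) ≤ p^i(1−p)^{n−i} for all 0 ≤ i ≤ n. Then the probability of undetected error satisfies P_ue(C,p) = Σ_{i=1}^n A_i p^i (1−p)^{n−i} ≥ |C|·f_0 − f(0). -/

import Mathlib

open Finset

noncomputable def distDistr (n : ℕ) (C : Finset (Fin n → ZMod 2)) (i : ℕ) : ℝ :=
  (((C ×ˢ C).filter (fun p => hammingDist p.1 p.2 = i)).card : ℝ) / (C.card : ℝ)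

noncomputable def kraw (n k i : ℕ) : ℝ :=
  ∑ j ∈ Finset.range (k + 1), (-1 : ℝ) ^ j * (i.choose j : ℝ) * ((n - i).choose (k - j) : ℝ)

lemma count_lemma {α : Type*} [Fintype α] [DecidableEq α] (D : Finset α) (k : ℕ) :
    ∑ T ∈ (univ : Finset α).powersetCard k, (-1 : ℝ) ^ ((T ∩ D).card)
      = kraw (Fintype.card α) k D.card := by
  have hsplit : ∑ T ∈ (univ : Finset α).powersetCard k, (-1 : ℝ) ^ ((T ∩ D).card)
      = ∑ q ∈ (D.powerset ×ˢ Dᶜ.powerset).filter (fun q => q.1.card + q.2.card = k),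
          (-1 : ℝ) ^ (q.1.card) := by
    refine Finset.sum_nbij' (fun T => (T ∩ D, T \ D)) (fun q => q.1 ∪ q.2) ?_ ?_ ?_ ?_ ?_
    · intro T hT
      simp only [mem_powersetCard, mem_filter, mem_product, mem_powerset] at *
      refine ⟨⟨inter_subset_right, fun x hx => ?_⟩, ?_⟩
      · simp only [mem_compl]; exact (mem_sdiff.mp hx).2
      · rw [card_inter_add_card_sdiff]; exact hT.2
    · intro q hq
      simp only [mem_powersetCard, mem_filter, mem_product, mem_powerset] at *
      constructor
      · exact subset_univ _
      · rw [card_union_of_disjoint, hq.2]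
        exact disjoint_of_subset_left hq.1.1 (disjoint_of_subset_right hq.1.2 disjoint_compl_right)
    · intro T _
      ext x; simp only [mem_union, mem_inter, mem_sdiff]; tauto
    · intro q hq
      simp only [mem_filter, mem_product, mem_powerset] at hq
      have h1 : q.1 ∩ D = q.1 := inter_eq_left.mpr hq.1.1
      have h2 : q.2 ∩ D = ∅ := by
        rw [← disjoint_iff_inter_eq_empty]
        exact disjoint_of_subset_left hq.1.2 disjoint_compl_left
      have hd : Disjoint q.1 q.2 :=
        disjoint_of_subset_left hq.1.1 (disjoint_of_subset_right hq.1.2 disjoint_compl_right)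
      ext x
      · simp only [union_inter_distrib_right, h1, h2, union_empty]
      · simp only [union_sdiff_distrib]
        rw [sdiff_eq_empty_iff_subset.mpr hq.1.1, sdiff_eq_self_of_disjoint]
        · simp
        · exact disjoint_of_subset_left hq.1.2 disjoint_compl_left
    · intro T hT
      have : T ∩ D ∩ D = T ∩ D := by rw [inter_assoc, inter_self]
      simp [this]
  rw [hsplit, Finset.sum_filter, Finset.sum_product]
  have hinner : ∀ A : Finset α, A ∈ D.powerset →
      (∑ B ∈ Dᶜ.powerset, if A.card + B.card = k then ((-1 : ℝ) ^ A.card) else 0)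
        = (-1 : ℝ) ^ A.card *
            (if A.card ≤ k then ((Dᶜ.card).choose (k - A.card) : ℝ) else 0) := by
    intro A _
    by_cases hA : A.card ≤ k
    · rw [if_pos hA]
      have hcond : ∀ B : Finset α, (A.card + B.card = k) ↔ (B.card = k - A.card) := by
        intro B; omega
      calc (∑ B ∈ Dᶜ.powerset, if A.card + B.card = k then ((-1 : ℝ) ^ A.card) else 0)
          = ∑ B ∈ Dᶜ.powerset.filter (fun B => B.card = k - A.card), (-1 : ℝ) ^ A.card := by
            rw [← Finset.sum_filter]
            exact Finset.sum_congr (by ext B; simp [hcond B]) (fun _ _ => rfl)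
        _ = ((Dᶜ.powersetCard (k - A.card)).card : ℝ) * (-1 : ℝ) ^ A.card := by
            rw [← powersetCard_eq_filter, Finset.sum_const, nsmul_eq_mul]
        _ = (-1 : ℝ) ^ A.card * ((Dᶜ.card).choose (k - A.card) : ℝ) := by
            rw [card_powersetCard]; ring
    · rw [if_neg hA, mul_zero]
      refine Finset.sum_eq_zero fun B _ => if_neg (by omega)
  rw [Finset.sum_congr rfl hinner, Finset.sum_powerset]
  have hdc : (Dᶜ.card : ℕ) = Fintype.card α - D.card := by
    rw [card_compl]
  set d := D.card with hd
  set m := Fintype.card α - d with hm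
  have hstep : ∀ j ∈ range (d + 1),
      (∑ A ∈ D.powersetCard j, (-1 : ℝ) ^ A.card *
        (if A.card ≤ k then ((Dᶜ.card).choose (k - A.card) : ℝ) else 0))
      = (d.choose j : ℝ) * ((-1 : ℝ) ^ j * (if j ≤ k then (m.choose (k - j) : ℝ) else 0)) := by
    intro j _
    have : ∀ A ∈ D.powersetCard j, (-1 : ℝ) ^ A.card *
        (if A.card ≤ k then ((Dᶜ.card).choose (k - A.card) : ℝ) else 0)
        = (-1 : ℝ) ^ j * (if j ≤ k then (m.choose (k - j) : ℝ) else 0) := by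
      intro A hA
      have hcard : A.card = j := (mem_powersetCard.mp hA).2
      rw [hcard, hdc]
    rw [Finset.sum_congr rfl this, Finset.sum_const, ← card_powersetCard j D, nsmul_eq_mul]
  rw [Finset.sum_congr rfl hstep]
  unfold kraw
  -- both sides equal the sum over range (d + k + 1)
  have hL : ∑ j ∈ range (d + 1),
      (d.choose j : ℝ) * ((-1 : ℝ) ^ j * (if j ≤ k then (m.choose (k - j) : ℝ) else 0))
      = ∑ j ∈ range (d + k + 1),
      (d.choose j : ℝ) * ((-1 : ℝ) ^ j * (if j ≤ k then (m.choose (k - j) : ℝ) else 0)) := by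
    refine Finset.sum_subset (by intro x; simp only [mem_range]; omega) ?_
    intro x _ hx
    simp only [mem_range, not_lt] at hx
    rw [Nat.choose_eq_zero_of_lt (by omega)]
    simp
  rw [hL]
  refine Eq.symm ?_
  have hcongr : ∑ j ∈ range (k + 1),
      (-1 : ℝ) ^ j * (d.choose j : ℝ) * (m.choose (k - j) : ℝ)
      = ∑ j ∈ range (k + 1),
      (d.choose j : ℝ) * ((-1 : ℝ) ^ j * (if j ≤ k then (m.choose (k - j) : ℝ) else 0)) := by
    refine Finset.sum_congr rfl fun j hj => ?_
    simp only [mem_range] at hj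
    rw [if_pos (by omega)]; ring
  rw [hcongr]
  refine Finset.sum_subset (fun x hx => ?_) (fun x _ hx => ?_)
  · simp only [mem_range] at *; omega
  · simp only [mem_range, not_lt] at hx
    rw [if_neg (by omega)]
    simp

noncomputable def sgn (n : ℕ) (T : Finset (Fin n)) (x : Fin n → ZMod 2) : ℝ :=
  ∏ j ∈ T, (-1 : ℝ) ^ ((x j).val)

lemma zmod2_sign (a b : ZMod 2) :
    (-1 : ℝ) ^ (a.val) * (-1 : ℝ) ^ (b.val) = if a = b then 1 else -1 := by
  have h01 : ∀ c : ZMod 2, c = 0 ∨ c = 1 := by decide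
  rcases h01 a with rfl | rfl <;> rcases h01 b with rfl | rfl <;>
    norm_num [show ZMod.val (0 : ZMod 2) = 0 from rfl, show ZMod.val (1 : ZMod 2) = 1 from rfl, show (0 : ZMod 2) ≠ 1 from by decide, show (1 : ZMod 2) ≠ 0 from by decide]

lemma kraw_eq_sum_sgn (n k : ℕ) (x y : Fin n → ZMod 2) :
    kraw n k (hammingDist x y)
      = ∑ T ∈ (univ : Finset (Fin n)).powersetCard k, sgn n T x * sgn n T y := by
  have hdist : hammingDist x y = ((univ : Finset (Fin n)).filter fun j => x j ≠ y j).card := rfl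
  have hterm : ∀ T : Finset (Fin n),
      sgn n T x * sgn n T y
        = (-1 : ℝ) ^ ((T ∩ (univ : Finset (Fin n)).filter fun j => x j ≠ y j).card) := by
    intro T
    unfold sgn
    rw [← Finset.prod_mul_distrib]
    have : ∀ j ∈ T, (-1 : ℝ) ^ ((x j).val) * (-1 : ℝ) ^ ((y j).val)
        = if x j = y j then 1 else -1 := fun j _ => zmod2_sign _ _
    rw [Finset.prod_congr rfl this, Finset.prod_ite, Finset.prod_const_one, one_mul,
      Finset.prod_const]
    congr 1
    congr 1
    ext j
    simp [mem_inter, mem_filter]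
  rw [Finset.sum_congr rfl fun T _ => hterm T, count_lemma, ← hdist]
  congr 1
  simp [Fintype.card_fin]

lemma delsarte (n k : ℕ) (C : Finset (Fin n → ZMod 2)) :
    0 ≤ ∑ q ∈ C ×ˢ C, kraw n k (hammingDist q.1 q.2) := by
  have : ∑ q ∈ C ×ˢ C, kraw n k (hammingDist q.1 q.2)
      = ∑ T ∈ (univ : Finset (Fin n)).powersetCard k, (∑ x ∈ C, sgn n T x) ^ 2 := by
    rw [Finset.sum_congr rfl fun q _ => kraw_eq_sum_sgn n k q.1 q.2, Finset.sum_comm]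
    refine Finset.sum_congr rfl fun T _ => ?_
    rw [sq, Finset.sum_mul_sum, ← Finset.sum_product']
  rw [this]
  exact Finset.sum_nonneg fun T _ => sq_nonneg _

lemma sum_A_kraw (n k : ℕ) (C : Finset (Fin n → ZMod 2)) :
    ∑ i ∈ range (n + 1), distDistr n C i * kraw n k i
      = (∑ q ∈ C ×ˢ C, kraw n k (hammingDist q.1 q.2)) / (C.card : ℝ) := by
  have hmaps : ∀ q ∈ C ×ˢ C, hammingDist q.1 q.2 ∈ range (n + 1) := by
    intro q _
    simp only [mem_range]
    have := hammingDist_le_card_fintype (x := q.1) (y := q.2)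
    simpa using Nat.lt_succ_of_le (by simpa using this)
  rw [← Finset.sum_fiberwise_of_maps_to hmaps (fun q => kraw n k (hammingDist q.1 q.2))]
  rw [Finset.sum_div]
  refine Finset.sum_congr rfl fun i _ => ?_
  unfold distDistr
  have : ∀ q ∈ (C ×ˢ C).filter (fun q => hammingDist q.1 q.2 = i),
      kraw n k (hammingDist q.1 q.2) = kraw n k i := by
    intro q hq
    rw [(mem_filter.mp hq).2]
  rw [Finset.sum_congr rfl this, Finset.sum_const, nsmul_eq_mul]
  ring

lemma kraw_zero (n i : ℕ) : kraw n 0 i = 1 := by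
  unfold kraw
  simp

lemma sum_A_kraw_nonneg (n k : ℕ) (C : Finset (Fin n → ZMod 2)) :
    0 ≤ ∑ i ∈ range (n + 1), distDistr n C i * kraw n k i := by
  rw [sum_A_kraw]
  exact div_nonneg (delsarte n k C) (Nat.cast_nonneg _)

lemma sum_A_zero (n : ℕ) (C : Finset (Fin n → ZMod 2)) (hC : C.Nonempty) :
    ∑ i ∈ range (n + 1), distDistr n C i * kraw n 0 i = (C.card : ℝ) := by
  rw [sum_A_kraw]
  have hcard : (C.card : ℝ) ≠ 0 := by
    exact_mod_cast (Finset.card_pos.mpr hC).ne'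
  simp only [kraw_zero, Finset.sum_const, nsmul_eq_mul, mul_one, Finset.card_product]
  push_cast
  field_simp

lemma distDistr_zero (n : ℕ) (C : Finset (Fin n → ZMod 2)) (hC : C.Nonempty) :
    distDistr n C 0 = 1 := by
  unfold distDistr
  have : ((C ×ˢ C).filter (fun p => hammingDist p.1 p.2 = 0)).card = C.card := by
    refine Finset.card_nbij' (fun q => q.1) (fun x => (x, x)) ?_ ?_ ?_ ?_
    · intro q hq
      simp only [mem_coe, mem_filter, mem_product] at hq
      exact hq.1.1
    · intro x hx
      simp only [mem_coe, mem_filter, mem_product]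
      exact ⟨⟨hx, hx⟩, by simp⟩
    · intro q hq
      simp only [mem_coe, mem_filter, mem_product, hammingDist_eq_zero] at hq
      ext <;> simp [hq.2]
    · intro x _; rfl
  rw [this]
  have hcard : (C.card : ℝ) ≠ 0 := by
    exact_mod_cast (Finset.card_pos.mpr hC).ne'
  field_simp

lemma distDistr_nonneg (n : ℕ) (C : Finset (Fin n → ZMod 2)) (i : ℕ) :
    0 ≤ distDistr n C i :=
  div_nonneg (Nat.cast_nonneg _) (Nat.cast_nonneg _)

lemma range_succ_eq_insert (n : ℕ) : Finset.range (n + 1) = insert 0 (Finset.Icc 1 n) := by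
  ext x
  simp only [mem_range, mem_insert, mem_Icc]
  omega

/-- Lower bound on the probability of undetected error:
`P_ue(C,p) = Σ_{i=1}^n A_i p^i (1−p)^{n−i} ≥ |C| f_0 − f(0)`. -/
theorem stmt8 (n : ℕ) (C : Finset (Fin n → ZMod 2)) (hC : C.Nonempty)
    (p : ℝ) (hp0 : 0 ≤ p) (hp : p ≤ 1 / 2)
    (fc : ℕ → ℝ)
    (hfc : ∀ k, 1 ≤ k → k ≤ n → 0 ≤ fc k)
    (hfg : ∀ i, i ≤ n →
      (∑ k ∈ Finset.range (n + 1), fc k * kraw n k i) ≤ p ^ i * (1 - p) ^ (n - i)) :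
    ∑ i ∈ Finset.Icc 1 n, distDistr n C i * p ^ i * (1 - p) ^ (n - i)
      ≥ (C.card : ℝ) * fc 0 - (∑ k ∈ Finset.range (n + 1), fc k * kraw n k 0) := by
  set F : ℕ → ℝ := fun i => ∑ k ∈ Finset.range (n + 1), fc k * kraw n k i with hF
  have h1 : ∑ i ∈ Finset.Icc 1 n, distDistr n C i * F i
      ≤ ∑ i ∈ Finset.Icc 1 n, distDistr n C i * p ^ i * (1 - p) ^ (n - i) := by
    refine Finset.sum_le_sum fun i hi => ?_
    have hi' : i ≤ n := (mem_Icc.mp hi).2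
    calc distDistr n C i * F i
        ≤ distDistr n C i * (p ^ i * (1 - p) ^ (n - i)) :=
          mul_le_mul_of_nonneg_left (hfg i hi') (distDistr_nonneg n C i)
      _ = distDistr n C i * p ^ i * (1 - p) ^ (n - i) := by ring
  have h2 : ∑ i ∈ Finset.range (n + 1), distDistr n C i * F i
      = F 0 + ∑ i ∈ Finset.Icc 1 n, distDistr n C i * F i := by
    rw [range_succ_eq_insert, Finset.sum_insert (by simp), distDistr_zero n C hC, one_mul]
  have h3 : ∑ i ∈ Finset.range (n + 1), distDistr n C i * F i
      = ∑ k ∈ Finset.range (n + 1), fc k *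
          (∑ i ∈ Finset.range (n + 1), distDistr n C i * kraw n k i) := by
    simp_rw [hF, Finset.mul_sum]
    rw [Finset.sum_comm]
    exact Finset.sum_congr rfl fun k _ => Finset.sum_congr rfl fun i _ => by ring
  set S : ℕ → ℝ := fun k => ∑ i ∈ Finset.range (n + 1), distDistr n C i * kraw n k i with hS
  have h4 : (C.card : ℝ) * fc 0 ≤ ∑ k ∈ Finset.range (n + 1), fc k * S k := by
    have hS0 : S 0 = (C.card : ℝ) := sum_A_zero n C hC
    rw [range_succ_eq_insert, Finset.sum_insert (by simp), hS0]
    have : 0 ≤ ∑ k ∈ Finset.Icc 1 n, fc k * S k := by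
      refine Finset.sum_nonneg fun k hk => ?_
      have hk' := mem_Icc.mp hk
      exact mul_nonneg (hfc k hk'.1 hk'.2) (sum_A_kraw_nonneg n k C)
    linarith
  have := h2 ▸ h3 ▸ h4
  linarith
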